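/- Suppose f : K → ℝ satisfies f k ≥ 0 for all k and f is a Wardrop user equilibrium state, i.e., there exist numbers v_w (w ∈ W) such that for every route k, f k · (c_k(f) − v_{od k}) = 0 and c_k(f) ≥ v_{od k}. Then f is an equilibrium of the route-choice dynamical system: J_k(f) = 0 for all k ∈ K. -/
import Mathlib


open Finset

/-- Link flow on arc `a` induced by route flows `f`. -/
noncomputable def linkFlow {A K : Type*} [Fintype K] (δ : A → K → ℝ)
    (f : K → ℝ) (a : A) : ℝ :=
  ∑ k, δ a k * f k

/-- Travel time on route `k` induced by route flows `f`. -/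
noncomputable def routeTime {A K : Type*} [Fintype A] [Fintype K] (δ : A → K → ℝ)
    (t : A → ℝ → ℝ) (f : K → ℝ) (k : K) : ℝ :=
  ∑ a, t a (linkFlow δ f a) * δ a k

/-- O-D FIFO violation of route `k` at route-flow state `f`. -/
noncomputable def fifoViolation {A W K : Type*} [Fintype A] [Fintype K] [DecidableEq W]
    (od : K → W) (δ : A → K → ℝ) (t : A → ℝ → ℝ) (f : K → ℝ) (k : K) : ℝ :=
  f k * ∑ j ∈ univ.filter (fun j => od j = od k),
    (routeTime δ t f k - routeTime δ t f j) * f j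

theorem wardrop_ue_is_equilibrium {A W K : Type*} [Fintype A] [Fintype W] [Fintype K] [DecidableEq W]
    (od : K → W) (δ : A → K → ℝ) (hδ : ∀ a k, δ a k = 0 ∨ δ a k = 1)
    (t : A → ℝ → ℝ)
    (f : K → ℝ) (hf : ∀ k, 0 ≤ f k) (v : W → ℝ)
    (hue₁ : ∀ k, f k * (routeTime δ t f k - v (od k)) = 0)
    (hue₂ : ∀ k, v (od k) ≤ routeTime δ t f k) :
    ∀ k, fifoViolation od δ t f k = 0 := by
  intro k
  unfold fifoViolation
  rcases eq_or_lt_of_le (hf k) with hk | hk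
  · rw [← hk, zero_mul]
  · have hck : routeTime δ t f k = v (od k) := by
      have := hue₁ k
      have : routeTime δ t f k - v (od k) = 0 := by
        rcases mul_eq_zero.mp this with h | h
        · exact absurd h.symm hk.ne
        · exact h
      linarith
    have : ∀ j ∈ univ.filter (fun j => od j = od k),
        (routeTime δ t f k - routeTime δ t f j) * f j = 0 := by
      intro j hj
      rcases eq_or_lt_of_le (hf j) with hj0 | hj0
      · rw [← hj0, mul_zero]
      · have hodj : od j = od k := (mem_filter.mp hj).2
        have hcj : routeTime δ t f j = v (od j) := by
          have := hue₁ j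
          rcases mul_eq_zero.mp this with h | h
          · exact absurd h.symm hj0.ne
          · linarith
        rw [hcj, hodj, hck]; ring
    rw [Finset.sum_eq_zero this, mul_zero]
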